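/- Let X be a real Banach space, κ an uncountable regular cardinal, and {x_α}_{α<κ} a strongly dispersed sequence in X. If X satisfies condition (B), then there is a strictly increasing map σ ↦ α_σ from κ to κ such that {x_{α_σ}}_{σ<κ} is a transfinite basic sequence; if moreover X satisfies condition (1-B), the subsequence can be chosen so that {x_{α_σ}}_{σ<κ} is a monotone transfinite basic sequence. -/

import Mathlib

open Cardinal Ordinal Set Pointwise

universe u

noncomputable def closedSpan {X : Type u} [SeminormedAddCommGroup X] [NormedSpace ℝ X]
    (s : Set X) : Submodule ℝ X :=
  (Submodule.span ℝ s).topologicalClosure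

def IsDispersed {X : Type u} [SeminormedAddCommGroup X] [NormedSpace ℝ X]
    (x : Ordinal.{u} → X) (lam : Ordinal.{u}) : Prop :=
  ∀ β < lam,
    (⋂ γ ∈ Set.Iio lam, (closedSpan (x '' {α | γ < α ∧ α < lam}) : Set X)) ⊂
      (closedSpan (x '' {α | β < α ∧ α < lam}) : Set X)

def IsStronglyDispersed {X : Type u} [SeminormedAddCommGroup X] [NormedSpace ℝ X]
    (x : Ordinal.{u} → X) (lam : Ordinal.{u}) : Prop :=
  IsDispersed x lam ∧
    (⋂ β ∈ Set.Iio lam, (closedSpan (x '' {α | β < α ∧ α < lam}) : Set X)) = {0}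

/-- transfinite basic sequence with constant C -/
def IsBasicSeqWithConst {X : Type u} [SeminormedAddCommGroup X] [NormedSpace ℝ X]
    (x : Ordinal.{u} → X) (θ : Ordinal.{u}) (C : ℝ) : Prop :=
  1 ≤ C ∧ (∀ α < θ, x α ≠ 0) ∧
  ∀ lam < θ, ∀ y ∈ closedSpan (x '' {α | α < lam}),
    ∀ z ∈ closedSpan (x '' {α | lam ≤ α ∧ α < θ}), ‖y‖ ≤ C * ‖y + z‖

/-- condition (B) -/
def CondB (X : Type u) [SeminormedAddCommGroup X] [NormedSpace ℝ X] : Prop :=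
  ∀ κ : Cardinal.{u}, κ.IsRegular → ℵ₀ < κ →
    ∀ Z : Ordinal.{u} → Submodule ℝ X,
      (∀ α < κ.ord, IsClosed ((Z α : Set X))) →
      (∀ α β, α ≤ β → β < κ.ord → Z β ≤ Z α) →
      (⋂ α ∈ Set.Iio κ.ord, (Z α : Set X)) = {0} →
      Bornology.IsBounded
        (⋂ α ∈ Set.Iio κ.ord, closure (Metric.closedBall (0:X) 1 + (Z α : Set X)))

/-- condition (r-B) -/
def CondrB (X : Type u) [SeminormedAddCommGroup X] [NormedSpace ℝ X] (r : ℝ) : Prop :=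
  ∀ κ : Cardinal.{u}, κ.IsRegular → ℵ₀ < κ →
    ∀ Z : Ordinal.{u} → Submodule ℝ X,
      (∀ α < κ.ord, IsClosed ((Z α : Set X))) →
      (∀ α β, α ≤ β → β < κ.ord → Z β ≤ Z α) →
      (⋂ α ∈ Set.Iio κ.ord, (Z α : Set X)) = {0} →
      (⋂ α ∈ Set.Iio κ.ord, closure (Metric.closedBall (0:X) 1 + (Z α : Set X))) ⊆
        Metric.closedBall (0:X) r

namespace StmtAux

attribute [local instance] Classical.propDecidable

lemma mk_list_lt {κ : Cardinal.{u}} (hunc : ℵ₀ < κ) {X : Type u} {G : Set X} (hG : #G < κ) :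
    #(List (ℚ × ↥G)) < κ := by
  have h1 : #(List (ℚ × ↥G)) ≤ max ℵ₀ #(ℚ × ↥G) := mk_list_le_max _
  have h2 : #(ℚ × ↥G) = Cardinal.lift.{u} #ℚ * Cardinal.lift.{0} #↥G := mk_prod _ _
  rw [Cardinal.mkRat] at h2
  simp only [Cardinal.lift_aleph0, Cardinal.lift_id'] at h2
  have h3 : #(ℚ × ↥G) < κ := by
    rw [h2]; exact Cardinal.mul_lt_of_lt hunc.le hunc hG
  exact h1.trans_lt (max_lt hunc h3)

lemma exists_cofinal_fiber {κ : Cardinal.{u}} (hreg : κ.IsRegular) (hunc : ℵ₀ < κ)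
    {ι : Type u} (hι : #ι < κ) (g : Ordinal.{u} → ι) :
    ∃ t : ι, ∀ β < κ.ord, ∃ lam, β < lam ∧ lam < κ.ord ∧ g lam = t := by
  by_contra hcon
  push_neg at hcon
  choose b hb1 hb2 using hcon
  have hsup : iSup b < κ.ord := Cardinal.iSup_lt_ord_of_isRegular hreg hι hb1
  have hlim : Order.IsSuccLimit κ.ord := Cardinal.isSuccLimit_ord hunc.le
  have hlt : iSup b + 1 < κ.ord := by
    have := hlim.succ_lt hsup
    simpa [Order.succ] using this
  set lam := iSup b + 1
  exact hb2 (g lam) lam ((Ordinal.le_iSup b _).trans_lt (lt_add_one _)) hlt rfl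

noncomputable def recPhi (o : Ordinal.{u})
    (P : (Ordinal.{u} → Ordinal.{u}) → Ordinal.{u} → Ordinal.{u} → Prop)
    (hex : ∀ σ, σ < o → ∀ f : Ordinal.{u} → Ordinal.{u}, (∀ τ, τ < σ → f τ < o) →
      ∃ lam, lam < o ∧ (∀ τ, τ < σ → f τ < lam) ∧ P f σ lam) :
    Ordinal.{u} → Ordinal.{u} :=
  WellFounded.fix Ordinal.lt_wf
    (fun σ IH =>
      if H : σ < o ∧ ∀ τ, τ < σ → (fun τ' => if h : τ' < σ then IH τ' h else 0) τ < o then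
        (hex σ H.1 (fun τ' => if h : τ' < σ then IH τ' h else 0) H.2).choose
      else 0)

lemma exists_rec (o : Ordinal.{u})
    (P : (Ordinal.{u} → Ordinal.{u}) → Ordinal.{u} → Ordinal.{u} → Prop)
    (hP : ∀ f g σ lam, (∀ τ, τ < σ → f τ = g τ) → P f σ lam → P g σ lam)
    (hex : ∀ σ, σ < o → ∀ f : Ordinal.{u} → Ordinal.{u}, (∀ τ, τ < σ → f τ < o) →
      ∃ lam, lam < o ∧ (∀ τ, τ < σ → f τ < lam) ∧ P f σ lam) :
    ∃ φ : Ordinal.{u} → Ordinal.{u}, ∀ σ, σ < o →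
      φ σ < o ∧ (∀ τ, τ < σ → φ τ < φ σ) ∧ P φ σ (φ σ) := by
  set φ := recPhi o P hex with hφ
  have hunf : ∀ σ, φ σ =
      if H : σ < o ∧ ∀ τ, τ < σ → (fun τ' => if h : τ' < σ then φ τ' else 0) τ < o then
        (hex σ H.1 (fun τ' => if h : τ' < σ then φ τ' else 0) H.2).choose
      else 0 := by
    intro σ
    rw [hφ, recPhi]
    exact WellFounded.fix_eq _ _ _
  refine ⟨φ, ?_⟩
  intro σ
  induction σ using Ordinal.induction with
  | _ σ IH =>
    intro hσ
    have hfval : ∀ τ, τ < σ → φ τ < o := fun τ hτ => (IH τ hτ (hτ.trans hσ)).1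
    have hH : σ < o ∧ ∀ τ, τ < σ → (fun τ' => if h : τ' < σ then φ τ' else 0) τ < o := by
      refine ⟨hσ, fun τ hτ => ?_⟩
      simp only [dif_pos hτ]
      exact hfval τ hτ
    have hstep : φ σ = (hex σ hH.1 (fun τ' => if h : τ' < σ then φ τ' else 0) hH.2).choose := by
      rw [hunf σ, dif_pos hH]
    obtain ⟨h1, h2, h3⟩ := (hex σ hH.1 (fun τ' => if h : τ' < σ then φ τ' else 0) hH.2).choose_spec
    rw [← hstep] at h1 h2 h3
    refine ⟨h1, fun τ hτ => ?_, ?_⟩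
    · have := h2 τ hτ
      simpa only [dif_pos hτ] using this
    · exact hP _ φ σ _ (fun τ hτ => by simp only [dif_pos hτ]) h3

variable {X : Type u} [NormedAddCommGroup X] [NormedSpace ℝ X]

lemma subset_closedSpan (G : Set X) : G ⊆ (closedSpan G : Set X) :=
  fun _ hg => (Submodule.span ℝ G).le_topologicalClosure (Submodule.subset_span hg)

lemma closedSpan_isClosed (G : Set X) : IsClosed ((closedSpan G : Set X)) :=
  Submodule.isClosed_topologicalClosure _

lemma closedSpan_le {G : Set X} {Z : Submodule ℝ X} (hG : G ⊆ Z) (hZ : IsClosed ((Z : Set X))) :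
    closedSpan G ≤ Z :=
  Submodule.topologicalClosure_minimal _ (Submodule.span_le.2 hG) hZ

/-- rational finite combinations of elements of `G` -/
noncomputable def combo (G : Set X) (l : List (ℚ × ↥G)) : X :=
  (l.map fun p => (p.1 : ℝ) • (p.2 : X)).sum

lemma combo_append (G : Set X) (l₁ l₂ : List (ℚ × ↥G)) :
    combo G (l₁ ++ l₂) = combo G l₁ + combo G l₂ := by
  simp [combo]

lemma combo_smul (G : Set X) (q : ℚ) (l : List (ℚ × ↥G)) :
    combo G (l.map fun p => (q * p.1, p.2)) = (q : ℝ) • combo G l := by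
  induction l with
  | nil => simp [combo]
  | cons a l ih =>
      simp only [combo, List.map_cons, List.sum_cons, smul_add] at *
      rw [ih, Rat.cast_mul, mul_smul]

lemma span_subset_closure_combo (G : Set X) :
    (Submodule.span ℝ G : Set X) ⊆ closure (Set.range (combo G)) := by
  intro y hy
  induction hy using Submodule.span_induction with
  | mem z hz => exact subset_closure ⟨[(1, ⟨z, hz⟩)], by simp [combo]⟩
  | zero => exact subset_closure ⟨[], by simp [combo]⟩
  | add a b ha hb iha ihb =>
      rw [Metric.mem_closure_iff] at iha ihb ⊢
      intro ε hε
      obtain ⟨p, ⟨l₁, hl₁⟩, hp⟩ := iha (ε/2) (by positivity)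
      obtain ⟨q, ⟨l₂, hl₂⟩, hq⟩ := ihb (ε/2) (by positivity)
      refine ⟨p + q, ⟨l₁ ++ l₂, by rw [combo_append, hl₁, hl₂]⟩, ?_⟩
      rw [dist_eq_norm] at hp hq ⊢
      calc ‖a + b - (p + q)‖ = ‖(a - p) + (b - q)‖ := by congr 1; abel
        _ ≤ ‖a - p‖ + ‖b - q‖ := norm_add_le _ _
        _ < ε/2 + ε/2 := by gcongr
        _ = ε := by ring
  | smul r a ha iha =>
      rw [Metric.mem_closure_iff] at iha ⊢
      intro ε hε
      have h1 : (0:ℝ) < min 1 (ε / (2 * (‖a‖ + 1))) := by positivity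
      obtain ⟨q, hq⟩ := exists_rat_near r h1
      obtain ⟨p, ⟨l, hl⟩, hp⟩ := iha (ε / (2 * (|r| + 1))) (by positivity)
      refine ⟨(q:ℝ) • p, ⟨l.map fun pr => (q * pr.1, pr.2), by rw [combo_smul, hl]⟩, ?_⟩
      rw [dist_eq_norm] at hp ⊢
      have hqr : |(q:ℝ)| ≤ |r| + 1 := by
        have := abs_sub_abs_le_abs_sub (q:ℝ) r
        have h2 : |r - (q:ℝ)| ≤ 1 := (le_of_lt hq).trans (min_le_left _ _)
        rw [abs_sub_comm] at h2
        linarith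
      have hrq : |r - (q:ℝ)| ≤ ε / (2 * (‖a‖ + 1)) := (le_of_lt hq).trans (min_le_right _ _)
      calc ‖r • a - (q:ℝ) • p‖
          = ‖(r - (q:ℝ)) • a + (q:ℝ) • (a - p)‖ := by
            congr 1
            rw [sub_smul, smul_sub]
            abel
        _ ≤ ‖(r - (q:ℝ)) • a‖ + ‖(q:ℝ) • (a - p)‖ := norm_add_le _ _
        _ = |r - (q:ℝ)| * ‖a‖ + |(q:ℝ)| * ‖a - p‖ := by rw [norm_smul, norm_smul]; rfl
        _ ≤ (ε / (2 * (‖a‖ + 1))) * ‖a‖ + (|r| + 1) * ‖a - p‖ := by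
            gcongr
        _ < (ε / (2 * (‖a‖ + 1))) * ‖a‖ + (|r| + 1) * (ε / (2 * (|r| + 1))) := by
            gcongr
        _ ≤ ε := by
            have hA : (0:ℝ) ≤ ‖a‖ := norm_nonneg a
            have e1 : (ε / (2 * (‖a‖ + 1))) * ‖a‖ ≤ ε/2 := by
              rw [div_mul_eq_mul_div, div_le_div_iff₀ (by positivity) (by norm_num)]
              nlinarith
            have e2 : (|r| + 1) * (ε / (2 * (|r| + 1))) = ε/2 := by
              have h3 : |r| + 1 ≠ 0 := by positivity
              field_simp
            linarith

lemma closedSpan_subset_closure_combo (G : Set X) :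
    ((closedSpan G : Set X)) ⊆ closure (Set.range (combo G)) := by
  have : (closedSpan G : Set X) = closure ((Submodule.span ℝ G : Set X)) :=
    Submodule.topologicalClosure_coe _
  rw [this]
  exact closure_minimal (span_subset_closure_combo G) isClosed_closure

noncomputable def Zt (x : Ordinal.{u} → X) (o β : Ordinal.{u}) : Submodule ℝ X :=
  closedSpan (x '' {α | β < α ∧ α < o})

def Ks (x : Ordinal.{u} → X) (o lam : Ordinal.{u}) : Set X :=
  ⋂ β ∈ Set.Iio lam, closure (Metric.closedBall (0:X) 1 + ((Zt x o β : Set X)))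

lemma Ks_anti(x : Ordinal.{u} → X) (o : Ordinal.{u}) {lam lam' : Ordinal.{u}} (h : lam ≤ lam') :
    Ks x o lam' ⊆ Ks x o lam := by
  intro v hv
  simp only [Ks, Set.mem_iInter] at hv ⊢
  exact fun β hβ => hv β (lt_of_lt_of_le hβ h)

lemma Zt_anti (x : Ordinal.{u} → X) (o : Ordinal.{u}) {β β' : Ordinal.{u}} (h : β ≤ β') :
    Zt x o β' ≤ Zt x o β :=
  Submodule.topologicalClosure_mono (Submodule.span_mono
    (Set.image_mono fun α hα => ⟨lt_of_le_of_lt h hα.1, hα.2⟩))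

lemma exists_nonzero (x : Ordinal.{u} → X) {o : Ordinal.{u}}
    (hsd : IsStronglyDispersed x o) {β : Ordinal.{u}} (hβ : β < o) :
    ∃ α, β < α ∧ α < o ∧ x α ≠ 0 := by
  by_contra hcon
  push_neg at hcon
  have himg : x '' {α | β < α ∧ α < o} ⊆ ({0} : Set X) := by
    rintro - ⟨α, ⟨h1, h2⟩, rfl⟩
    exact hcon α h1 h2
  have hle : closedSpan (x '' {α | β < α ∧ α < o}) ≤ ⊥ :=
    closedSpan_le (by simpa using himg) (by simp)
  have hstrict := hsd.1 β hβ
  rw [hsd.2] at hstrict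
  obtain ⟨v, hv⟩ := Set.exists_of_ssubset hstrict
  exact hv.2 (by simpa using hle hv.1)

/-- members of the scaled tail span lie in `Zt` -/
lemma tail_le_Zt (x : Ordinal.{u} → X) {o lam β : Ordinal.{u}} (φ : Ordinal.{u} → Ordinal.{u})
    (hmono : ∀ σ τ, σ < τ → τ < o → φ σ < φ τ) (hlt : ∀ σ, σ < o → φ σ < o)
    (hβ : β < φ lam) (hlam : lam < o) :
    closedSpan ((fun σ => x (φ σ)) '' {α | lam ≤ α ∧ α < o}) ≤ Zt x o β := by
  apply closedSpan_le _ (closedSpan_isClosed _)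
  rintro - ⟨σ, ⟨h1, h2⟩, rfl⟩
  have hφσ : β < φ σ := by
    rcases eq_or_lt_of_le h1 with rfl | h1'
    · exact hβ
    · exact hβ.trans (hmono lam σ h1' h2)
  exact subset_closedSpan _ ⟨φ σ, ⟨hφσ, hlt σ h2⟩, rfl⟩

lemma core{κ : Cardinal.{u}} (hreg : κ.IsRegular) (hunc : ℵ₀ < κ)
    (x : Ordinal.{u} → X) {r C : ℝ} (hr : 0 ≤ r) (hrC : r < C)
    (hK : Ks x κ.ord κ.ord ⊆ Metric.closedBall 0 r)
    (G : Set X) (hG : #G < κ) :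
    ∃ lam, lam < κ.ord ∧ ∀ y ∈ (closedSpan G : Set X), y ∈ Ks x κ.ord lam → ‖y‖ ≤ C := by
  by_contra hcon
  push_neg at hcon
  choose y hy1 hy2 hy3 using hcon
  set ε : ℝ := (C - r) / (r + 1) with hε
  have hεpos : 0 < ε := by
    apply _root_.div_pos <;> linarith
  -- choose approximating rational combinations
  have hnil : ∀ lam, ∃ l : List (ℚ × ↥G), ∀ hlam : lam < κ.ord,
      dist (y lam hlam) (combo G l) < ε := by
    intro lam
    by_cases h : lam < κ.ord
    · have h1 := closedSpan_subset_closure_combo G (hy1 lam h)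
      rw [Metric.mem_closure_iff] at h1
      obtain ⟨p, ⟨l, hl⟩, hp⟩ := h1 ε hεpos
      exact ⟨l, fun _ => by rwa [hl]⟩
    · exact ⟨[], fun h' => absurd h' h⟩
  choose g hg using hnil
  obtain ⟨t, ht⟩ := exists_cofinal_fiber hreg hunc (mk_list_lt hunc hG) g
  set d : X := combo G t with hd
  have hd1 : 0 < 1 + ε := by linarith
  -- the scaled-down d is in every closure(ball + Zt β)
  have hA : ∀ β, β < κ.ord → (1 + ε)⁻¹ • d ∈
      closure (Metric.closedBall (0:X) 1 + ((Zt x κ.ord β : Set X))) := by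
    intro β hβ
    obtain ⟨lam, hβlam, hlam, hglam⟩ := ht β hβ
    have hyd : dist (y lam hlam) d < ε := by
      have := hg lam hlam
      rwa [hglam] at this
    have hyK : y lam hlam ∈ closure (Metric.closedBall (0:X) 1 + ((Zt x κ.ord β : Set X))) := by
      have := hy2 lam hlam
      simp only [Ks, Set.mem_iInter] at this
      exact this β hβlam
    rw [Metric.mem_closure_iff] at hyK ⊢
    intro δ hδ
    obtain ⟨p, hp, hpd⟩ := hyK δ hδ
    rw [Set.mem_add] at hp
    obtain ⟨b, hb, z, hz, hbz⟩ := hp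
    set e : X := d - y lam hlam with he
    refine ⟨(1 + ε)⁻¹ • ((b + e) + z), ?_, ?_⟩
    · rw [Set.mem_add]
      refine ⟨(1 + ε)⁻¹ • (b + e), ?_, (1 + ε)⁻¹ • z, ?_, by rw [← smul_add]⟩
      · rw [mem_closedBall_zero_iff] at hb ⊢
        rw [norm_smul, norm_inv, Real.norm_eq_abs, abs_of_pos hd1]
        have hbe : ‖b + e‖ ≤ 1 + ε := by
          have hee : ‖e‖ ≤ ε := by
            rw [he, ← dist_eq_norm, dist_comm]
            exact hyd.le
          calc ‖b + e‖ ≤ ‖b‖ + ‖e‖ := norm_add_le _ _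
            _ ≤ 1 + ε := by gcongr
        calc (1 + ε)⁻¹ * ‖b + e‖ ≤ (1 + ε)⁻¹ * (1 + ε) := by gcongr
          _ = 1 := inv_mul_cancel₀ hd1.ne'
      · exact (Zt x κ.ord β).smul_mem _ hz
    · have : d = (y lam hlam) + e := by rw [he]; abel
      rw [dist_smul₀, Real.norm_eq_abs, abs_of_pos (inv_pos.2 hd1)]
      have heq : dist d ((b + e) + z) = dist (y lam hlam) p := by
        rw [this, ← hbz, dist_eq_norm, dist_eq_norm]
        congr 1
        abel
      rw [heq]
      have h5 : (1 + ε)⁻¹ ≤ 1 := by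
        rw [inv_le_one_iff₀]
        right; linarith
      calc (1 + ε)⁻¹ * dist (y lam hlam) p ≤ 1 * dist (y lam hlam) p :=
            mul_le_mul_of_nonneg_right h5 dist_nonneg
        _ < δ := by rwa [one_mul]
  have hdK : (1 + ε)⁻¹ • d ∈ Ks x κ.ord κ.ord := by
    simp only [Ks, Set.mem_iInter]
    exact fun β hβ => hA β hβ
  have hdr : ‖d‖ ≤ (1 + ε) * r := by
    have := hK hdK
    rw [mem_closedBall_zero_iff, norm_smul, norm_inv, Real.norm_eq_abs, abs_of_pos hd1] at this
    calc ‖d‖ = (1 + ε) * ((1 + ε)⁻¹ * ‖d‖) := by field_simp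
      _ ≤ (1 + ε) * r := by gcongr
  -- contradiction
  have hord0 : (0 : Ordinal.{u}) < κ.ord := (Cardinal.isSuccLimit_ord hunc.le).pos
  obtain ⟨lam, _, hlam, hglam⟩ := ht 0 hord0
  have h1 : C < ‖y lam hlam‖ := hy3 lam hlam
  have h2 : ‖y lam hlam‖ ≤ ‖d‖ + ε := by
    have := hg lam hlam
    rw [hglam] at this
    calc ‖y lam hlam‖ = dist (y lam hlam) 0 := (dist_zero_right _).symm
      _ ≤ dist (y lam hlam) d + dist d 0 := dist_triangle _ _ _
      _ = ‖d‖ + dist (y lam hlam) d := by rw [dist_zero_right]; ring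
      _ ≤ ‖d‖ + ε := by linarith
  have h3 : (1 + ε) * r + ε = C := by
    rw [hε]
    field_simp
    ring
  linarith

lemma main {κ : Cardinal.{u}} (hreg : κ.IsRegular) (hunc : ℵ₀ < κ)
    (x : Ordinal.{u} → X) (hsd : IsStronglyDispersed x κ.ord) {C : ℝ} (hC : 1 ≤ C)
    (hcore : ∀ G : Set X, #G < κ → ∃ lam, lam < κ.ord ∧
      ∀ y ∈ (closedSpan G : Set X), y ∈ Ks x κ.ord lam → ‖y‖ ≤ C) :
    ∃ φ : Ordinal.{u} → Ordinal.{u}, StrictMonoOn φ (Set.Iio κ.ord) ∧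
      (∀ σ < κ.ord, φ σ < κ.ord) ∧ IsBasicSeqWithConst (fun σ => x (φ σ)) κ.ord C := by
  set P : (Ordinal.{u} → Ordinal.{u}) → Ordinal.{u} → Ordinal.{u} → Prop :=
    fun f σ lam => x lam ≠ 0 ∧
      ∀ y ∈ (closedSpan (x '' (f '' Set.Iio σ)) : Set X), y ∈ Ks x κ.ord lam → ‖y‖ ≤ C
    with hPdef
  have hP : ∀ f g σ lam, (∀ τ, τ < σ → f τ = g τ) → P f σ lam → P g σ lam := by
    rintro f g σ lam hfg ⟨h1, h2⟩
    refine ⟨h1, ?_⟩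
    have himg : g '' Set.Iio σ = f '' Set.Iio σ := by
      ext w; constructor <;> rintro ⟨τ, hτ, rfl⟩
      exacts [⟨τ, hτ, hfg τ hτ⟩, ⟨τ, hτ, (hfg τ hτ).symm⟩]
    rw [himg]
    exact h2
  have hex : ∀ σ, σ < κ.ord → ∀ f : Ordinal.{u} → Ordinal.{u}, (∀ τ, τ < σ → f τ < κ.ord) →
      ∃ lam, lam < κ.ord ∧ (∀ τ, τ < σ → f τ < lam) ∧ P f σ lam := by
    intro σ hσ f hf
    have hG : #(x '' (f '' Set.Iio σ)) < κ := by
      have h1 : x '' (f '' Set.Iio σ) = (x ∘ f) '' Set.Iio σ := by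
        rw [Set.image_image]; rfl
      have h2 : Cardinal.lift.{u+1} #(x '' (f '' Set.Iio σ)) ≤
          Cardinal.lift.{u} #(Set.Iio σ) := by
        rw [h1]; exact Cardinal.mk_image_le_lift
      rw [Ordinal.mk_Iio_ordinal, Cardinal.lift_lift] at h2
      have h3 : #(x '' (f '' Set.Iio σ)) ≤ σ.card := by
        rwa [Cardinal.lift_le] at h2
      exact h3.trans_lt (Cardinal.lt_ord.1 hσ)
    obtain ⟨lam₀, hlam₀, hlam₀'⟩ := hcore _ hG
    have hμlt : Ordinal.bsup σ (fun τ _ => f τ + 1) < κ.ord := by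
      apply Cardinal.bsup_lt_ord_of_isRegular hreg (Cardinal.lt_ord.1 hσ)
      intro τ hτ
      rw [Ordinal.add_one_eq_succ]
      exact (Cardinal.isSuccLimit_ord hunc.le).succ_lt (hf τ hτ)
    set μ := Ordinal.bsup σ (fun τ _ => f τ + 1) with hμ
    obtain ⟨α, hα1, hα2, hα3⟩ := exists_nonzero x hsd (max_lt hlam₀ hμlt)
    refine ⟨α, hα2, ?_, hα3, ?_⟩
    · intro τ hτ
      have hb : f τ + 1 ≤ μ := Ordinal.le_bsup _ τ hτ
      have : f τ < μ := lt_of_lt_of_le (lt_add_one _) hb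
      exact this.trans_le ((le_max_right _ _).trans hα1.le)
    · intro y hy hyK
      exact hlam₀' y hy (Ks_anti x κ.ord ((le_max_left _ _).trans hα1.le) hyK)
  have hrec := exists_rec κ.ord P hP hex
  obtain ⟨φ, hφ⟩ := hrec
  have hlt : ∀ σ, σ < κ.ord → φ σ < κ.ord := fun σ hσ => (hφ σ hσ).1
  have hmono : ∀ σ τ, σ < τ → τ < κ.ord → φ σ < φ τ := fun σ τ h1 h2 => (hφ τ h2).2.1 σ h1
  refine ⟨φ, ?_, hlt, hC, ?_, ?_⟩
  · intro a _ b hb hab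
    exact hmono a b hab hb
  · intro α hα
    exact ((hφ α hα).2.2).1
  · intro lam hlam y hy z hz
    have hC0 : (0:ℝ) < C := lt_of_lt_of_le one_pos hC
    have hIio : {α : Ordinal.{u} | α < lam} = Set.Iio lam := rfl
    have himg : (fun σ => x (φ σ)) '' {α | α < lam} = x '' (φ '' Set.Iio lam) := by
      rw [Set.image_image]
      rfl
    have hy' : y ∈ (closedSpan (x '' (φ '' Set.Iio lam)) : Set X) := by
      rw [← himg]; exact hy
    have key : ∀ s : ℝ, ‖y + z‖ < s → ‖y‖ ≤ C * s := by
      intro s hs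
      have hs0 : 0 < s := lt_of_le_of_lt (norm_nonneg _) hs
      have hyscale : s⁻¹ • y ∈ (closedSpan (x '' (φ '' Set.Iio lam)) : Set X) :=
        (closedSpan (x '' (φ '' Set.Iio lam))).smul_mem _ hy'
      have hKmem : s⁻¹ • y ∈ Ks x κ.ord (φ lam) := by
        simp only [Ks, Set.mem_iInter]
        intro β hβ
        apply subset_closure
        rw [Set.mem_add]
        have hzZ : z ∈ Zt x κ.ord β :=
          tail_le_Zt x φ hmono hlt hβ hlam hz
        refine ⟨s⁻¹ • (y + z), ?_, -(s⁻¹ • z), ?_, ?_⟩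
        · rw [mem_closedBall_zero_iff, norm_smul, norm_inv, Real.norm_eq_abs,
            abs_of_pos hs0]
          rw [inv_mul_le_iff₀ hs0, mul_one]
          exact hs.le
        · exact (Zt x κ.ord β).neg_mem ((Zt x κ.ord β).smul_mem _ hzZ)
        · rw [smul_add]; abel
      have := ((hφ lam hlam).2.2).2 (s⁻¹ • y) hyscale hKmem
      rw [norm_smul, norm_inv, Real.norm_eq_abs, abs_of_pos hs0, inv_mul_le_iff₀ hs0] at this
      linarith [this]
    by_contra hcon
    push_neg at hcon
    have hstep : ‖y + z‖ < ‖y + z‖ + (‖y‖ - C * ‖y + z‖) / (2 * C) := by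
      have : 0 < (‖y‖ - C * ‖y + z‖) / (2 * C) := by
        apply _root_.div_pos <;> linarith
      linarith
    have h2 := key _ hstep
    have h3 : C * (‖y + z‖ + (‖y‖ - C * ‖y + z‖) / (2 * C)) =
        C * ‖y + z‖ + (‖y‖ - C * ‖y + z‖) / 2 := by
      field_simp
    linarith

end StmtAux

theorem stmt2 {X : Type u} [NormedAddCommGroup X] [NormedSpace ℝ X] [CompleteSpace X]
    (κ : Cardinal.{u}) (hreg : κ.IsRegular) (hunc : ℵ₀ < κ)
    (x : Ordinal.{u} → X) (hsd : IsStronglyDispersed x κ.ord) :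
    (CondB X →
      ∃ φ : Ordinal.{u} → Ordinal.{u}, StrictMonoOn φ (Set.Iio κ.ord) ∧
        (∀ σ < κ.ord, φ σ < κ.ord) ∧
        ∃ C : ℝ, IsBasicSeqWithConst (fun σ => x (φ σ)) κ.ord C) ∧
    (CondB X → CondrB X 1 →
      ∃ φ : Ordinal.{u} → Ordinal.{u}, StrictMonoOn φ (Set.Iio κ.ord) ∧
        (∀ σ < κ.ord, φ σ < κ.ord) ∧
        IsBasicSeqWithConst (fun σ => x (φ σ)) κ.ord 1) := by
  have hZclosed : ∀ α < κ.ord, IsClosed ((StmtAux.Zt x κ.ord α : Set X)) :=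
    fun α _ => StmtAux.closedSpan_isClosed _
  have hZanti : ∀ α β, α ≤ β → β < κ.ord → StmtAux.Zt x κ.ord β ≤ StmtAux.Zt x κ.ord α :=
    fun α β h _ => StmtAux.Zt_anti x κ.ord h
  have hZinter : (⋂ α ∈ Set.Iio κ.ord, ((StmtAux.Zt x κ.ord α : Set X))) = {0} := by
    simpa only [StmtAux.Zt] using hsd.2
  constructor
  · intro hB
    have hbdd := hB κ hreg hunc (StmtAux.Zt x κ.ord) hZclosed hZanti hZinter
    have hKbd : Bornology.IsBounded (StmtAux.Ks x κ.ord κ.ord) := hbdd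
    obtain ⟨R, hR⟩ := hKbd.subset_closedBall (0:X)
    have hball : StmtAux.Ks x κ.ord κ.ord ⊆ Metric.closedBall 0 (max R 0) :=
      hR.trans (Metric.closedBall_subset_closedBall (le_max_left _ _))
    have hr0 : (0:ℝ) ≤ max R 0 := le_max_right _ _
    obtain ⟨φ, h1, h2, h3⟩ := StmtAux.main hreg hunc x hsd
      (by linarith : (1:ℝ) ≤ max R 0 + 1)
      (fun G hG => StmtAux.core hreg hunc x hr0 (lt_add_one _) hball G hG)
    exact ⟨φ, h1, h2, max R 0 + 1, h3⟩
  · intro hB hB1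
    have hK1 : StmtAux.Ks x κ.ord κ.ord ⊆ Metric.closedBall 0 1 :=
      hB1 κ hreg hunc (StmtAux.Zt x κ.ord) hZclosed hZanti hZinter
    have hcore1 : ∀ G : Set X, #G < κ → ∃ lam, lam < κ.ord ∧
        ∀ y ∈ ((closedSpan G : Submodule ℝ X) : Set X),
          y ∈ StmtAux.Ks x κ.ord lam → ‖y‖ ≤ 1 := by
      intro G hG
      have hn : ∀ n : ℕ, ∃ lam, lam < κ.ord ∧
          ∀ y ∈ ((closedSpan G : Submodule ℝ X) : Set X),
            y ∈ StmtAux.Ks x κ.ord lam → ‖y‖ ≤ 1 + 1/(n+1) := by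
        intro n
        apply StmtAux.core hreg hunc x zero_le_one ?_ hK1 G hG
        have : (0:ℝ) < 1/(n+1) := by positivity
        linarith
      choose lamf hlam1 hlam2 using hn
      set g : ULift.{u} ℕ → Ordinal.{u} := fun m => lamf m.down with hg
      have hsup_lt : iSup g < κ.ord := by
        apply Cardinal.iSup_lt_ord_of_isRegular (f := g) hreg ?_ (fun m => hlam1 m.down)
        rw [Cardinal.mk_uLift, Cardinal.mk_nat, Cardinal.lift_aleph0]
        exact hunc
      refine ⟨_, hsup_lt, ?_⟩
      intro y hy hyK
      by_contra hy1
      push_neg at hy1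
      obtain ⟨n, hn'⟩ := exists_nat_one_div_lt (by linarith : (0:ℝ) < ‖y‖ - 1)
      have hle := hlam2 n y hy
        (StmtAux.Ks_anti x κ.ord (Ordinal.le_iSup g (ULift.up n)) hyK)
      linarith
    exact StmtAux.main hreg hunc x hsd le_rfl hcore1
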